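/- arXiv:2504.11551 — 4 statements merged into one kernel-verified Lean document; each statement's English description precedes it below -/
import Mathlib

section
/- Let A > 0 and B > 0, let s_+ = (1/(2A))(A - B - 1 + sqrt((A-B-1)^2 + 4AB)), and define r_+ = B(1 - s_+)/s_+. Then 0 < r_+ < 1. -/
open Real

/-- The receiver equilibrium value `r_+ = B(1-s_+)/s_+` lies in `(0,1)`. -/
theorem rp_mem (A B : ℝ) (hA : 0 < A) (hB : 0 < B) :
    (let sp := (1/(2*A)) * (A - B - 1 + Real.sqrt ((A - B - 1)^2 + 4*A*B));
     let rp := B * (1 - sp) / sp;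
     0 < rp ∧ rp < 1) := by
  intro sp rp
  set D := Real.sqrt ((A - B - 1)^2 + 4*A*B) with hDdef
  have hnn : (0:ℝ) ≤ (A - B - 1)^2 + 4*A*B := by nlinarith [sq_nonneg (A - B - 1)]
  have hD2 : D^2 = (A - B - 1)^2 + 4*A*B := Real.sq_sqrt hnn
  have hDnn : 0 ≤ D := Real.sqrt_nonneg _
  have hDgt : B + 1 - A < D := by
    have h : (B + 1 - A)^2 < D^2 := by nlinarith
    exact lt_of_pow_lt_pow_left₀ 2 hDnn h
  have hDlt : D < A + B + 1 := by
    have h : D^2 < (A + B + 1)^2 := by nlinarith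
    exact lt_of_pow_lt_pow_left₀ 2 (by linarith) h
  have hsum : 0 < A - B - 1 + D := by linarith
  have hsp_pos : 0 < sp := by
    have : (0:ℝ) < 1/(2*A) := by positivity
    exact mul_pos this hsum
  have hsp_lt1 : sp < 1 := by
    show (1/(2*A)) * (A - B - 1 + D) < 1
    rw [div_mul_eq_mul_div, div_lt_one (by linarith)]
    linarith
  have hA' : (2*A) ≠ 0 := by positivity
  have hquad : A * sp^2 + (1 + B - A) * sp - B = 0 := by
    show A * ((1/(2*A)) * (A - B - 1 + D))^2 + (1 + B - A) * ((1/(2*A)) * (A - B - 1 + D)) - B = 0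
    field_simp
    nlinarith [hD2]
  constructor
  · exact div_pos (mul_pos hB (by linarith)) hsp_pos
  · rw [div_lt_one hsp_pos]
    nlinarith [mul_pos hsp_pos (sub_pos.mpr hsp_lt1)]
end

section
/- Fix positive parameters α, β, γ, M, N and define f : ℝ² → ℝ² by f(R,S) = (α(1-R) - β(M/N)RS, γ(1-S) - β(N/M)RS). The point (R*, S*) with S* = (1/(2A))(A-B-1 + sqrt((A-B-1)^2 + 4AB)), R* = B(1-S*)/S*, where A = γM²/(αN²) and B = γM/(βN), satisfies f(R*,S*) = (0,0). -/
open Real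

lemma aux_eq1 (A B S : ℝ) (hB : B ≠ 0) (hS : S ≠ 0)
    (hq : A * S^2 + (1 + B - A) * S - B = 0) :
    (1 - B*(1-S)/S) - (A/B) * (B*(1-S)/S) * S = 0 := by
  field_simp
  linear_combination hq

lemma aux_eq2 (B S : ℝ) (hB : B ≠ 0) (hS : S ≠ 0) :
    (1 - S) - (B*(1-S)/S) * S / B = 0 := by
  field_simp
  ring

/-- The point `(R*, S*)` built from the larger root of the equilibrium quadratic is a
zero of the vector field of the two-dimensional foraging model. -/
theorem equilibrium_is_zero (α β γ M N : ℝ) (hα : 0 < α) (hβ : 0 < β) (hγ : 0 < γ)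
    (hM : 0 < M) (hN : 0 < N) :
    (let A := γ * M^2 / (α * N^2);
     let B := γ * M / (β * N);
     let Sstar := (1/(2*A)) * (A - B - 1 + Real.sqrt ((A - B - 1)^2 + 4*A*B));
     let Rstar := B * (1 - Sstar) / Sstar;
     α * (1 - Rstar) - β * (M/N) * Rstar * Sstar = 0 ∧
     γ * (1 - Sstar) - β * (N/M) * Rstar * Sstar = 0) := by
  intro A B Sstar Rstar
  have hA : 0 < A := by unfold A; positivity
  have hB : 0 < B := by unfold B; positivity
  have hD : 0 ≤ (A - B - 1)^2 + 4*A*B := by positivity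
  have hs2 : (Real.sqrt ((A - B - 1)^2 + 4*A*B))^2 = (A - B - 1)^2 + 4*A*B :=
    Real.sq_sqrt hD
  set s := Real.sqrt ((A - B - 1)^2 + 4*A*B) with hsdef
  have hsnn : 0 ≤ s := Real.sqrt_nonneg _
  have hsgt : -(A - B - 1) < s := by nlinarith
  have hSpos : 0 < Sstar := by
    have h1 : 0 < A - B - 1 + s := by linarith
    show 0 < (1/(2*A)) * (A - B - 1 + s)
    positivity
  have hSne : Sstar ≠ 0 := ne_of_gt hSpos
  have hquad : A * Sstar^2 + (1 + B - A) * Sstar - B = 0 := by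
    show A * ((1/(2*A)) * (A - B - 1 + s))^2 + (1+B-A)*((1/(2*A)) * (A - B - 1 + s)) - B = 0
    field_simp
    nlinarith [hs2]
  have e1 := aux_eq1 A B Sstar (ne_of_gt hB) hSne hquad
  have e2 := aux_eq2 B Sstar (ne_of_gt hB) hSne
  have hc1 : β * (M/N) = α * A / B := by
    show β * (M/N) = α * (γ * M^2 / (α * N^2)) / (γ * M / (β * N))
    field_simp
  have hc2 : β * (N/M) = γ / B := by
    show β * (N/M) = γ / (γ * M / (β * N))
    field_simp
  have hRdef : Rstar = B * (1 - Sstar) / Sstar := rfl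
  constructor
  · rw [hc1, hRdef]
    linear_combination α * e1
  · rw [hc2, hRdef]
    linear_combination γ * e2
end

section
/- Fix positive parameters α, β, γ, M, N. The system ẋR = α(1-R) - β(M/N)RS, ẋS = γ(1-S) - β(N/M)RS has exactly one equilibrium (R*,S*) with both coordinates in [0,1]. -/
open Real Set

/-- The two-dimensional foraging model has exactly one equilibrium in `[0,1]²`. -/
theorem unique_equilibrium (α β γ M N : ℝ) (hα : 0 < α) (hβ : 0 < β) (hγ : 0 < γ)
    (hM : 0 < M) (hN : 0 < N) :
    ∃! q : ℝ × ℝ, q.1 ∈ Icc (0:ℝ) 1 ∧ q.2 ∈ Icc (0:ℝ) 1 ∧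
      α * (1 - q.1) - β * (M/N) * q.1 * q.2 = 0 ∧
      γ * (1 - q.2) - β * (N/M) * q.1 * q.2 = 0 := by
  obtain ⟨b1, hb1⟩ : ∃ x : ℝ, x = β * (M/N) := ⟨_, rfl⟩
  obtain ⟨b2, hb2⟩ : ∃ x : ℝ, x = β * (N/M) := ⟨_, rfl⟩
  rw [← hb1, ← hb2]
  have hb1p : 0 < b1 := by rw [hb1]; positivity
  have hb2p : 0 < b2 := by rw [hb2]; positivity
  obtain ⟨c, hc⟩ : ∃ x : ℝ, x = α * b2 / γ := ⟨_, rfl⟩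
  have hcp : 0 < c := by rw [hc]; positivity
  have hcγ : γ * c = α * b2 := by rw [hc]; field_simp
  obtain ⟨B, hB⟩ : ∃ x : ℝ, x = b1 - c + α := ⟨_, rfl⟩
  obtain ⟨D, hD⟩ : ∃ x : ℝ, x = B^2 + 4*c*α := ⟨_, rfl⟩
  have hDp : 0 < D := by rw [hD]; positivity
  have hsDnn : 0 ≤ Real.sqrt D := Real.sqrt_nonneg D
  have hsD2 : Real.sqrt D ^ 2 = B^2 + 4*c*α := by rw [Real.sq_sqrt hDp.le, hD]
  obtain ⟨R, hR⟩ : ∃ x : ℝ, x = (-B + Real.sqrt D)/(2*c) := ⟨_, rfl⟩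
  have h2cR : 2*c*R = -B + Real.sqrt D := by rw [hR]; field_simp
  have hquad : c*R^2 + B*R - α = 0 := by
    have h4 : 4*c*(c*R^2 + B*R - α) = 0 := by
      linear_combination (2*c*R + Real.sqrt D + B) * h2cR + hsD2
    rcases mul_eq_zero.mp h4 with h | h
    · exact absurd h (by positivity)
    · exact h
  have hBlt : B < Real.sqrt D := by
    nlinarith [hsD2, hsDnn, mul_pos hcp hα]
  have hRpos : 0 < R := by
    rw [hR]; exact div_pos (by linarith) (by linarith)
  have hsDlt : Real.sqrt D < B + 2*c := by
    have h1 : D < (B + 2*c)^2 := by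
      rw [hD]; nlinarith [mul_pos hcp hb1p, hB, hcp]
    exact (Real.sqrt_lt' (by nlinarith [hb1p, hcp, hα, hB])).mpr h1
  have hRlt1 : R < 1 := by
    rw [hR, div_lt_one (by linarith)]; linarith
  obtain ⟨S, hS⟩ : ∃ x : ℝ, x = α*(1-R)/(b1*R) := ⟨_, rfl⟩
  have hb1Rp : 0 < b1 * R := mul_pos hb1p hRpos
  have hS' : b1 * R * S = α * (1 - R) := by
    rw [hS]; field_simp
  have he1R : α * (1 - R) - b1 * R * S = 0 := by linarith
  have he2R : γ * (1 - S) - b2 * R * S = 0 := by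
    have h : b1 * R * (γ * (1 - S) - b2 * R * S) = 0 := by
      linear_combination (-(γ + b2*R)) * hS' + γ * hquad + (R - R^2) * hcγ - (γ*R) * hB
    rcases mul_eq_zero.mp h with h' | h'
    · exact absurd h' hb1Rp.ne'
    · exact h'
  have hSnn : 0 ≤ S := by
    rw [hS]
    exact div_nonneg (mul_nonneg hα.le (by linarith)) hb1Rp.le
  have hSle : S ≤ 1 := by
    rw [hS, div_le_one hb1Rp]
    have hkey : α*(1-R) - b1*R = -(c*R*(1-R)) := by
      linear_combination (-1) * hquad + R * hB
    nlinarith [mul_nonneg (mul_nonneg hcp.le hRpos.le) (by linarith : (0:ℝ) ≤ 1 - R)]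
  refine ⟨(R, S), ⟨⟨hRpos.le, hRlt1.le⟩, ⟨hSnn, hSle⟩, by
    simpa using he1R, by simpa using he2R⟩, ?_⟩
  rintro ⟨x, y⟩ ⟨⟨hx0, hx1⟩, ⟨hy0, hy1⟩, he1, he2⟩
  simp only at he1 he2 hx0 hx1 hy0 hy1
  have hquadx : c*x^2 + B*x - α = 0 := by
    have h : γ * (c*x^2 + B*x - α) = 0 := by
      linear_combination (b1*x) * he2 - (γ + b2*x) * he1 + (x^2 - x) * hcγ + (γ*x) * hB
    rcases mul_eq_zero.mp h with h' | h'
    · exact absurd h' hγ.ne'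
    · exact h'
  have hfac : (x - R) * (c*(x+R)+B) = 0 := by linear_combination hquadx - hquad
  have hpos : 0 < c*(x+R)+B := by
    have h1 : R*(c*R+B) = α := by linear_combination hquad
    have h2 : 0 < c*R+B := by
      by_contra hcon
      push_neg at hcon
      have := mul_nonpos_iff.mpr (Or.inr ⟨hcon, hRpos.le⟩)
      rw [mul_comm] at this
      linarith
    have h3 : 0 ≤ c*x := mul_nonneg hcp.le hx0
    linarith
  have hxR : x = R := by
    rcases mul_eq_zero.mp hfac with h | h
    · linarith
    · linarith
  have hyS : y = S := by
    subst hxR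
    have h : b1 * x * (y - S) = 0 := by linarith [he1, he1R]
    rcases mul_eq_zero.mp h with h' | h'
    · exact absurd h' hb1Rp.ne'
    · linarith
  simp [hxR, hyS]
end

section
/- Fix positive parameters α, β, M, N, μ, ν, γ₀, k, p₀, n. Define h(x) = k/(1 + (p₀ / (2(ν/μ)α(N²/M)(1-x)))ⁿ) + γ₀ for x in [0,1) and h(1) = γ₀, and g(x) = αβ(N²/M)x(1-x)/(βMx - αN(1-x)). Then there exists at least one x* in (αN/(αN+βM), 1) with h(x*) = g(x*). -/
set_option maxHeartbeats 1000000


open Real Set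

/-- Existence of an equilibrium: the curves `h` (pheromone feedback) and `g`
(flow balance) intersect in `(αN/(αN+βM), 1)`. -/
theorem equilibrium_exists (α β M N μ ν γ₀ k p₀ n : ℝ)
    (hα : 0 < α) (hβ : 0 < β) (hM : 0 < M) (hN : 0 < N) (hμ : 0 < μ) (hν : 0 < ν)
    (hγ₀ : 0 < γ₀) (hk : 0 < k) (hp₀ : 0 < p₀) (hn : 0 < n)
    (g h : ℝ → ℝ)
    (hg : ∀ x, g x = α * β * (N^2/M) * (x * (1 - x)) / (β * M * x - α * N * (1 - x)))
    (hh : (∀ x ∈ Ico (0:ℝ) 1,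
            h x = k / (1 + (p₀ / (2 * (ν/μ) * α * (N^2/M) * (1 - x))) ^ n) + γ₀) ∧
          h 1 = γ₀) :
    ∃ x ∈ Ioo (α * N / (α * N + β * M)) 1, h x = g x := by
  obtain ⟨hh1, _⟩ := hh
  set S := α * N + β * M with hSdef
  have hS : 0 < S := by positivity
  set x₀ := α * N / S with hx₀def
  have hx₀ : 0 < x₀ := by positivity
  have hSx₀ : S * x₀ = α * N := by rw [hx₀def, mul_div_assoc']; exact mul_div_cancel_left₀ _ hS.ne'
  have h1x₀ : 0 < 1 - x₀ := by
    have : x₀ < 1 := by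
      rw [hx₀def, div_lt_one hS]; nlinarith
    linarith
  set c := α * β * (N^2/M) * (x₀ * (1 - x₀) / 2) with hcdef
  have hc : 0 < c := by positivity
  set δ := min (c / (S * (k + γ₀))) ((1 - x₀) / 2) / 2 with hδdef
  have hδ : 0 < δ := by positivity
  have hδ1 : δ ≤ (1 - x₀) / 4 := by
    have := min_le_right (c / (S * (k + γ₀))) ((1 - x₀) / 2)
    rw [hδdef]; linarith
  have hδ2 : δ ≤ c / (S * (k + γ₀)) / 2 := by
    have := min_le_left (c / (S * (k + γ₀))) ((1 - x₀) / 2)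
    rw [hδdef]; linarith
  set ε := min ((1 - x₀) / 2) (γ₀ * M^2 / (4 * α * N^2)) with hεdef
  have hε : 0 < ε := by positivity
  have hε1 : ε ≤ (1 - x₀) / 2 := min_le_left _ _
  have hε2 : ε ≤ γ₀ * M^2 / (4 * α * N^2) := min_le_right _ _
  set a := x₀ + δ with hadef
  set b := (1 : ℝ) - ε with hbdef
  have hab : a < b := by rw [hadef, hbdef]; linarith
  have ha0 : 0 < a := by positivity
  have hb1 : b < 1 := by rw [hbdef]; linarith
  have hax₀ : x₀ < a := by rw [hadef]; linarith
  have ha1 : a < 1 := lt_trans hab hb1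
  -- denominator identity
  have hden : ∀ x : ℝ, β * M * x - α * N * (1 - x) = S * (x - x₀) := by
    intro x
    have : S * (x - x₀) = S * x - S * x₀ := by ring
    rw [this, hSx₀, hSdef]; ring
  -- g a > k + γ₀
  have hga : k + γ₀ < g a := by
    rw [hg a, hden a]
    have hden_pos : 0 < S * (a - x₀) := by
      apply mul_pos hS; linarith
    have haδ : a - x₀ = δ := by rw [hadef]; ring
    have hnum : c ≤ α * β * (N^2/M) * (a * (1 - a)) := by
      rw [hcdef]
      have h1a : (1 - x₀) / 2 ≤ 1 - a := by rw [hadef]; linarith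
      have hmm := mul_le_mul hax₀.le h1a (by positivity) ha0.le
      have hpa : x₀ * (1 - x₀) / 2 ≤ a * (1 - a) := by linarith
      have hpos : (0:ℝ) ≤ α * β * (N^2/M) := by positivity
      exact mul_le_mul_of_nonneg_left hpa hpos
    have h2 : 2 * (k + γ₀) ≤ c / (S * (a - x₀)) := by
      rw [le_div_iff₀ hden_pos, haδ]
      have hδ2' : δ * (S * (k + γ₀) * 2) ≤ c := by
        rw [div_div] at hδ2
        exact (le_div_iff₀ (by positivity)).mp hδ2
      nlinarith
    have h3 : c / (S * (a - x₀)) ≤ α * β * (N^2/M) * (a * (1 - a)) / (S * (a - x₀)) := by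
      gcongr
    linarith
  -- g b < γ₀
  have hgb : g b < γ₀ := by
    rw [hg b, hden b]
    have hbx₀ : (1 - x₀) / 2 ≤ b - x₀ := by rw [hbdef]; linarith
    have hden_pos : 0 < S * (b - x₀) := by
      apply mul_pos hS; linarith
    have hb0 : 0 < b := by rw [hbdef]; nlinarith [hε1, h1x₀]
    have h1b : 1 - b = ε := by rw [hbdef]; ring
    have hnum : α * β * (N^2/M) * (b * (1 - b)) ≤ α * β * (N^2/M) * ε := by
      rw [h1b]
      have hbε : b * ε ≤ ε := by nlinarith
      have hpos : (0:ℝ) ≤ α * β * (N^2/M) := by positivity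
      exact mul_le_mul_of_nonneg_left hbε hpos
    have hdenlb : β * M / 2 ≤ S * (b - x₀) := by
      have : S * ((1 - x₀)/2) ≤ S * (b - x₀) := by
        apply mul_le_mul_of_nonneg_left hbx₀ hS.le
      have hS1x₀ : S * (1 - x₀) = β * M := by
        have : S * (1 - x₀) = S - S * x₀ := by ring
        rw [this, hSx₀, hSdef]; ring
      nlinarith
    have h2 : α * β * (N^2/M) * (b * (1 - b)) / (S * (b - x₀)) ≤ α * β * (N^2/M) * ε / (β * M / 2) := by
      exact div_le_div₀ (by positivity) hnum (by positivity) hdenlb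
    have h3 : α * β * (N^2/M) * ε / (β * M / 2) ≤ γ₀ / 2 := by
      rw [div_le_div_iff₀ (by positivity) (by norm_num)]
      have hε2' : ε * (4 * α * N^2) ≤ γ₀ * M^2 := (le_div_iff₀ (by positivity)).mp hε2
      rw [show α * β * (N^2/M) * ε * 2 = (α * β * N^2 * ε * 2) / M by field_simp,
        div_le_iff₀ hM]
      nlinarith [mul_le_mul_of_nonneg_left hε2' hβ.le]
    linarith
  -- set C for h
  set C := 2 * (ν/μ) * α * (N^2/M) with hCdef
  have hC : 0 < C := by positivity
  -- h bounds on [0,1)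
  have hh_bounds : ∀ x ∈ Ico (0:ℝ) 1, γ₀ ≤ h x ∧ h x ≤ k + γ₀ := by
    intro x hx
    have hx1 : 0 < 1 - x := by linarith [hx.2]
    rw [hh1 x hx]
    have ht : 0 < (p₀ / (C * (1 - x))) ^ n := by
      apply Real.rpow_pos_of_pos; positivity
    constructor
    · have : 0 ≤ k / (1 + (p₀ / (C * (1 - x))) ^ n) := by positivity
      linarith
    · have : k / (1 + (p₀ / (C * (1 - x))) ^ n) ≤ k := by
        apply div_le_self hk.le; linarith
      linarith
  -- continuity of g on [a,b]
  have hIcc_sub : Icc a b ⊆ Ico (0:ℝ) 1 := by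
    intro x hx
    exact ⟨le_trans ha0.le hx.1, lt_of_le_of_lt hx.2 hb1⟩
  have hcontg : ContinuousOn g (Icc a b) := by
    apply ContinuousOn.congr (f := fun x => α * β * (N^2/M) * (x * (1 - x)) / (β * M * x - α * N * (1 - x)))
    · apply ContinuousOn.div
      · fun_prop
      · fun_prop
      · intro x hx
        rw [hden x]
        have : x₀ < x := lt_of_lt_of_le hax₀ hx.1
        exact ne_of_gt (mul_pos hS (by linarith))
    · intro x _; exact hg x
  have hconth : ContinuousOn h (Icc a b) := by
    apply ContinuousOn.congr (f := fun x => k / (1 + (p₀ / (C * (1 - x))) ^ n) + γ₀)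
    · apply ContinuousOn.add _ continuousOn_const
      apply ContinuousOn.div continuousOn_const
      · apply ContinuousOn.add continuousOn_const
        apply ContinuousOn.rpow_const
        · apply ContinuousOn.div continuousOn_const
          · fun_prop
          · intro x hx
            have : x < 1 := lt_of_le_of_lt hx.2 hb1
            have : 0 < 1 - x := by linarith
            positivity
        · intro x hx
          have h1x : 0 < 1 - x := by
            have := lt_of_le_of_lt hx.2 hb1; linarith
          left
          positivity
      · intro x hx
        have h1x : 0 < 1 - x := by
          have := lt_of_le_of_lt hx.2 hb1; linarith
        have : 0 < (p₀ / (C * (1 - x))) ^ n := by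
          apply Real.rpow_pos_of_pos; positivity
        positivity
    · intro x hx
      exact hh1 x (hIcc_sub hx)
  -- F := h - g
  have hcontF : ContinuousOn (fun x => h x - g x) (Icc a b) := hconth.sub hcontg
  have hFa : h a - g a < 0 := by
    have := (hh_bounds a (hIcc_sub ⟨le_refl a, hab.le⟩)).2
    linarith
  have hFb : 0 < h b - g b := by
    have := (hh_bounds b (hIcc_sub ⟨hab.le, le_refl b⟩)).1
    linarith
  have h0mem : (0:ℝ) ∈ Ioo (h a - g a) (h b - g b) := ⟨hFa, hFb⟩
  have := intermediate_value_Ioo hab.le hcontF h0mem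
  obtain ⟨x, hxmem, hx0⟩ := this
  have hx0' : h x - g x = 0 := hx0
  exact ⟨x, ⟨lt_trans hax₀ hxmem.1, lt_trans hxmem.2 hb1⟩, by linarith⟩
end
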